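/- Let C be a finitely complete pointed category with coequalizers in which regular epimorphisms are stable under binary products. If C is a Gumm category (satisfies the categorical shifting lemma), then C satisfies property (P). -/

import Mathlib

open CategoryTheory Limits

/-- `q` is a coequalizer of the parallel pair `(u, v)`. -/
def IsCoeq {C : Type*} [Category C] {T X Q : C} (u v : T ⟶ X) (q : X ⟶ Q) : Prop :=
  ∃ h : u ≫ q = v ≫ q, Nonempty (IsColimit (Cofork.ofπ q h))

/-- Property (P): the product of two coequalizer diagrams is a coequalizer diagram. -/
def PropertyP (C : Type*) [Category C] [HasBinaryProducts C] : Prop :=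
  ∀ {T₁ T₂ X X' Y Y' : C} (u v : T₁ ⟶ X) (u' v' : T₂ ⟶ Y) (q₁ : X ⟶ X') (q₂ : Y ⟶ Y'),
    IsCoeq u v q₁ → IsCoeq u' v' q₂ →
      IsCoeq (prod.map u u') (prod.map v v') (prod.map q₁ q₂)

/-- A regular epimorphism: a coequalizer of some parallel pair. -/
def IsRegEpi {C : Type*} [Category C] {X Q : C} (q : X ⟶ Q) : Prop :=
  ∃ (T : C) (a b : T ⟶ X), IsCoeq a b q

/-- A generalized element `m : S ⟶ X` belongs to the (sub)object `r : R ⟶ X` if it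
factors through `r`. -/
def Factors {C : Type*} [Category C] {R X S : C} (r : R ⟶ X) (m : S ⟶ X) : Prop :=
  ∃ h : S ⟶ R, h ≫ r = m

/-- The relation on generalized elements determined by a relation `r : R ⟶ X ⨯ X`. -/
def ERel {C : Type*} [Category C] [HasBinaryProducts C] {R X S : C}
    (r : R ⟶ X ⨯ X) (a b : S ⟶ X) : Prop :=
  Factors r (prod.lift a b)

/-- `r : R ⟶ X ⨯ X` is an (internal) equivalence relation: a monomorphism whose
induced relation on generalized elements is reflexive, symmetric and transitive. -/
def IsEquivRel {C : Type*} [Category C] [HasBinaryProducts C] {R X : C}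
    (r : R ⟶ X ⨯ X) : Prop :=
  Mono r ∧ (∀ {S : C} (a : S ⟶ X), ERel r a a) ∧
    (∀ {S : C} (a b : S ⟶ X), ERel r a b → ERel r b a) ∧
    (∀ {S : C} (a b c : S ⟶ X), ERel r a b → ERel r b c → ERel r a c)

/-- A Gumm category: the shifting lemma holds for internal equivalence relations. -/
def Gumm (C : Type*) [Category C] [HasBinaryProducts C] : Prop :=
  ∀ {X R' S' T' : C} (R : R' ⟶ X ⨯ X) (S : S' ⟶ X ⨯ X) (T : T' ⟶ X ⨯ X),
    IsEquivRel R → IsEquivRel S → IsEquivRel T →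
    (∀ {U : C} (a b : U ⟶ X), ERel R a b → ERel S a b → ERel T a b) →
    ∀ {U : C} (x y z w : U ⟶ X),
      ERel R x y → ERel R w z → ERel S y z → ERel S x w → ERel T y z → ERel T x w

section Helpers

variable {C : Type*} [Category C]

/-- Transfer a coequalizer along another parallel pair with the same "quotient power". -/
lemma IsCoeq.transfer {T T' X Q : C} {a b : T ⟶ X} {u v : T' ⟶ X} {q : X ⟶ Q}
    (h : IsCoeq a b q) (huv : u ≫ q = v ≫ q)
    (key : ∀ {Z : C} (f : X ⟶ Z), u ≫ f = v ≫ f → a ≫ f = b ≫ f) :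
    IsCoeq u v q := by
  obtain ⟨hab, ⟨hc⟩⟩ := h
  have hepi : Epi q := ⟨fun f g hfg => Cofork.IsColimit.hom_ext hc hfg⟩
  refine ⟨huv, ⟨Cofork.IsColimit.mk _
    (fun s => Cofork.IsColimit.desc hc s.π (key s.π s.condition)) (fun s => ?_) ?_⟩⟩
  · exact Cofork.IsColimit.π_desc' hc s.π (key s.π s.condition)
  · intro s m hm
    apply hepi.left_cancellation
    have hm' : q ≫ m = s.π := hm
    rw [hm']
    exact (Cofork.IsColimit.π_desc' hc s.π (key s.π s.condition)).symm

variable [HasFiniteLimits C]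

/-- The kernel pair of `f` as a relation on `X`. -/
noncomputable def kpRel {X Z : C} (f : X ⟶ Z) : pullback f f ⟶ X ⨯ X :=
  prod.lift (pullback.fst f f) (pullback.snd f f)

lemma erel_kpRel {X Z S : C} (f : X ⟶ Z) (a b : S ⟶ X) :
    ERel (kpRel f) a b ↔ a ≫ f = b ≫ f := by
  constructor
  · rintro ⟨h, hh⟩
    have h1 : h ≫ pullback.fst f f = a := by
      have := congrArg (fun t => t ≫ prod.fst) hh
      simpa [kpRel, prod.lift_fst, prod.lift_snd] using this
    have h2 : h ≫ pullback.snd f f = b := by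
      have := congrArg (fun t => t ≫ prod.snd) hh
      simpa [kpRel, prod.lift_fst, prod.lift_snd] using this
    rw [← h1, ← h2, Category.assoc, Category.assoc, pullback.condition]
  · intro h
    exact ⟨pullback.lift a b h, by apply Limits.prod.hom_ext <;> simp [kpRel, prod.lift_fst, prod.lift_snd, pullback.lift_fst, pullback.lift_snd]⟩

lemma isEquivRel_kpRel {X Z : C} (f : X ⟶ Z) : IsEquivRel (kpRel f) := by
  refine ⟨⟨fun g h hgh => ?_⟩, fun a => ?_, fun a b hab => ?_, fun a b c hab hbc => ?_⟩
  · apply pullback.hom_ext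
    · have := congrArg (fun t => t ≫ prod.fst) hgh
      simpa [kpRel, prod.lift_fst, prod.lift_snd] using this
    · have := congrArg (fun t => t ≫ prod.snd) hgh
      simpa [kpRel, prod.lift_fst, prod.lift_snd] using this
  · rw [erel_kpRel]
  · rw [erel_kpRel] at *; exact hab.symm
  · rw [erel_kpRel] at *; exact hab.trans hbc

end Helpers

theorem stmt7 {C : Type*} [Category C] [HasFiniteLimits C] [HasCoequalizers C]
    [HasZeroObject C] [HasZeroMorphisms C]
    (hstab : ∀ {X X' Y Y' : C} (f : X ⟶ X') (g : Y ⟶ Y'),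
      IsRegEpi f → IsRegEpi g → IsRegEpi (prod.map f g))
    (hG : Gumm C) : PropertyP C := by
  intro T₁ T₂ X X' Y Y' u v u' v' q₁ q₂ hq₁ hq₂
  obtain ⟨h₁, ⟨c₁⟩⟩ := hq₁
  obtain ⟨h₂, ⟨c₂⟩⟩ := hq₂
  -- the product map is a regular epi
  obtain ⟨T₃, a, b, habe, hcQ⟩ :=
    hstab q₁ q₂ ⟨T₁, u, v, h₁, ⟨c₁⟩⟩ ⟨T₂, u', v', h₂, ⟨c₂⟩⟩
  -- the product map is the coequalizer of its kernel pair
  have hkp : IsCoeq (pullback.fst (prod.map q₁ q₂) (prod.map q₁ q₂))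
      (pullback.snd (prod.map q₁ q₂) (prod.map q₁ q₂)) (prod.map q₁ q₂) := by
    refine IsCoeq.transfer ⟨habe, hcQ⟩ pullback.condition ?_
    intro Z g hg
    have h1 : pullback.lift a b habe ≫ pullback.fst (prod.map q₁ q₂) (prod.map q₁ q₂) = a :=
      pullback.lift_fst _ _ _
    have h2 : pullback.lift a b habe ≫ pullback.snd (prod.map q₁ q₂) (prod.map q₁ q₂) = b :=
      pullback.lift_snd _ _ _
    calc a ≫ g = pullback.lift a b habe ≫
          pullback.fst (prod.map q₁ q₂) (prod.map q₁ q₂) ≫ g := by rw [← Category.assoc, h1]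
      _ = pullback.lift a b habe ≫
          pullback.snd (prod.map q₁ q₂) (prod.map q₁ q₂) ≫ g := by rw [hg]
      _ = b ≫ g := by rw [← Category.assoc, h2]
  have hcond : prod.map u u' ≫ prod.map q₁ q₂ = prod.map v v' ≫ prod.map q₁ q₂ := by
    rw [prod.map_map, prod.map_map, h₁, h₂]
  refine hkp.transfer hcond ?_
  intro Z f hf
  -- shifting lemma, form 1 : moving the second coordinate at fixed first coordinate
  have shift1 : ∀ {U : C} (x : U ⟶ X) (y y' : U ⟶ Y),
      prod.lift (0 : U ⟶ X) y ≫ f = prod.lift (0 : U ⟶ X) y' ≫ f →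
      prod.lift x y ≫ f = prod.lift x y' ≫ f := by
    intro U x y y' h0
    have hRS : ∀ {V : C} (c d : V ⟶ X ⨯ Y), ERel (kpRel (prod.snd : X ⨯ Y ⟶ Y)) c d →
        ERel (kpRel (prod.fst : X ⨯ Y ⟶ X)) c d → ERel (kpRel f) c d := by
      intro V c d hR hS
      rw [erel_kpRel] at hR hS ⊢
      rw [Limits.prod.hom_ext hS hR]
    have hmain := hG (kpRel (prod.snd : X ⨯ Y ⟶ Y)) (kpRel (prod.fst : X ⨯ Y ⟶ X)) (kpRel f)
      (isEquivRel_kpRel _) (isEquivRel_kpRel _) (isEquivRel_kpRel _) hRS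
      (prod.lift x y) (prod.lift 0 y) (prod.lift 0 y') (prod.lift x y')
      ((erel_kpRel _ _ _).2 (by simp [prod.lift_fst, prod.lift_snd])) ((erel_kpRel _ _ _).2 (by simp [prod.lift_fst, prod.lift_snd]))
      ((erel_kpRel _ _ _).2 (by simp [prod.lift_fst, prod.lift_snd])) ((erel_kpRel _ _ _).2 (by simp [prod.lift_fst, prod.lift_snd]))
      ((erel_kpRel _ _ _).2 h0)
    exact (erel_kpRel _ _ _).1 hmain
  -- shifting lemma, form 2 : moving the first coordinate at fixed second coordinate
  have shift2 : ∀ {U : C} (x x' : U ⟶ X) (y : U ⟶ Y),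
      prod.lift x (0 : U ⟶ Y) ≫ f = prod.lift x' (0 : U ⟶ Y) ≫ f →
      prod.lift x y ≫ f = prod.lift x' y ≫ f := by
    intro U x x' y h0
    have hRS : ∀ {V : C} (c d : V ⟶ X ⨯ Y), ERel (kpRel (prod.fst : X ⨯ Y ⟶ X)) c d →
        ERel (kpRel (prod.snd : X ⨯ Y ⟶ Y)) c d → ERel (kpRel f) c d := by
      intro V c d hR hS
      rw [erel_kpRel] at hR hS ⊢
      rw [Limits.prod.hom_ext hR hS]
    have hmain := hG (kpRel (prod.fst : X ⨯ Y ⟶ X)) (kpRel (prod.snd : X ⨯ Y ⟶ Y)) (kpRel f)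
      (isEquivRel_kpRel _) (isEquivRel_kpRel _) (isEquivRel_kpRel _) hRS
      (prod.lift x y) (prod.lift x 0) (prod.lift x' 0) (prod.lift x' y)
      ((erel_kpRel _ _ _).2 (by simp [prod.lift_fst, prod.lift_snd])) ((erel_kpRel _ _ _).2 (by simp [prod.lift_fst, prod.lift_snd]))
      ((erel_kpRel _ _ _).2 (by simp [prod.lift_fst, prod.lift_snd])) ((erel_kpRel _ _ _).2 (by simp [prod.lift_fst, prod.lift_snd]))
      ((erel_kpRel _ _ _).2 h0)
    exact (erel_kpRel _ _ _).1 hmain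
  -- elements with zero first coordinate: f only depends on q₂ of the second coordinate
  have hy0 : ∀ {U : C} (y y' : U ⟶ Y), y ≫ q₂ = y' ≫ q₂ →
      prod.lift (0 : U ⟶ X) y ≫ f = prod.lift (0 : U ⟶ X) y' ≫ f := by
    intro U y y' hyy
    have e1 : prod.lift (0 : T₂ ⟶ T₁) (𝟙 T₂) ≫ prod.map u u' = prod.lift (0 : T₂ ⟶ X) u' := by
      apply Limits.prod.hom_ext <;> simp
    have e2 : prod.lift (0 : T₂ ⟶ T₁) (𝟙 T₂) ≫ prod.map v v' = prod.lift (0 : T₂ ⟶ X) v' := by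
      apply Limits.prod.hom_ext <;> simp
    have l1 : u' ≫ prod.lift (0 : Y ⟶ X) (𝟙 Y) = prod.lift (0 : T₂ ⟶ X) u' := by
      apply Limits.prod.hom_ext <;> simp
    have l2 : v' ≫ prod.lift (0 : Y ⟶ X) (𝟙 Y) = prod.lift (0 : T₂ ⟶ X) v' := by
      apply Limits.prod.hom_ext <;> simp
    have hφ : u' ≫ prod.lift (0 : Y ⟶ X) (𝟙 Y) ≫ f = v' ≫ prod.lift (0 : Y ⟶ X) (𝟙 Y) ≫ f := by
      calc u' ≫ prod.lift (0 : Y ⟶ X) (𝟙 Y) ≫ f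
          = (prod.lift (0 : T₂ ⟶ T₁) (𝟙 T₂) ≫ prod.map u u') ≫ f := by
            rw [← Category.assoc, l1, e1]
        _ = (prod.lift (0 : T₂ ⟶ T₁) (𝟙 T₂) ≫ prod.map v v') ≫ f := by
            rw [Category.assoc, Category.assoc, hf]
        _ = v' ≫ prod.lift (0 : Y ⟶ X) (𝟙 Y) ≫ f := by
            rw [e2, ← Category.assoc, l2]
    have hψ : q₂ ≫ Cofork.IsColimit.desc c₂ (prod.lift (0 : Y ⟶ X) (𝟙 Y) ≫ f) hφ
        = prod.lift (0 : Y ⟶ X) (𝟙 Y) ≫ f := Cofork.IsColimit.π_desc' c₂ _ _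
    have ey : ∀ (w : U ⟶ Y), w ≫ prod.lift (0 : Y ⟶ X) (𝟙 Y) = prod.lift (0 : U ⟶ X) w := by
      intro w; apply Limits.prod.hom_ext <;> simp
    calc prod.lift (0 : U ⟶ X) y ≫ f = y ≫ prod.lift (0 : Y ⟶ X) (𝟙 Y) ≫ f := by
          rw [← Category.assoc, ey]
      _ = (y ≫ q₂) ≫ Cofork.IsColimit.desc c₂ (prod.lift (0 : Y ⟶ X) (𝟙 Y) ≫ f) hφ := by
          rw [Category.assoc, hψ]
      _ = (y' ≫ q₂) ≫ Cofork.IsColimit.desc c₂ (prod.lift (0 : Y ⟶ X) (𝟙 Y) ≫ f) hφ := by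
          rw [hyy]
      _ = y' ≫ prod.lift (0 : Y ⟶ X) (𝟙 Y) ≫ f := by rw [Category.assoc, hψ]
      _ = prod.lift (0 : U ⟶ X) y' ≫ f := by rw [← Category.assoc, ey]
  -- elements with zero second coordinate: f only depends on q₁ of the first coordinate
  have hx0 : ∀ {U : C} (x x' : U ⟶ X), x ≫ q₁ = x' ≫ q₁ →
      prod.lift x (0 : U ⟶ Y) ≫ f = prod.lift x' (0 : U ⟶ Y) ≫ f := by
    intro U x x' hxx
    have e1 : prod.lift (𝟙 T₁) (0 : T₁ ⟶ T₂) ≫ prod.map u u' = prod.lift u (0 : T₁ ⟶ Y) := by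
      apply Limits.prod.hom_ext <;> simp
    have e2 : prod.lift (𝟙 T₁) (0 : T₁ ⟶ T₂) ≫ prod.map v v' = prod.lift v (0 : T₁ ⟶ Y) := by
      apply Limits.prod.hom_ext <;> simp
    have l1 : u ≫ prod.lift (𝟙 X) (0 : X ⟶ Y) = prod.lift u (0 : T₁ ⟶ Y) := by
      apply Limits.prod.hom_ext <;> simp
    have l2 : v ≫ prod.lift (𝟙 X) (0 : X ⟶ Y) = prod.lift v (0 : T₁ ⟶ Y) := by
      apply Limits.prod.hom_ext <;> simp
    have hφ : u ≫ prod.lift (𝟙 X) (0 : X ⟶ Y) ≫ f = v ≫ prod.lift (𝟙 X) (0 : X ⟶ Y) ≫ f := by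
      calc u ≫ prod.lift (𝟙 X) (0 : X ⟶ Y) ≫ f
          = (prod.lift (𝟙 T₁) (0 : T₁ ⟶ T₂) ≫ prod.map u u') ≫ f := by
            rw [← Category.assoc, l1, e1]
        _ = (prod.lift (𝟙 T₁) (0 : T₁ ⟶ T₂) ≫ prod.map v v') ≫ f := by
            rw [Category.assoc, Category.assoc, hf]
        _ = v ≫ prod.lift (𝟙 X) (0 : X ⟶ Y) ≫ f := by
            rw [e2, ← Category.assoc, l2]
    have hψ : q₁ ≫ Cofork.IsColimit.desc c₁ (prod.lift (𝟙 X) (0 : X ⟶ Y) ≫ f) hφ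
        = prod.lift (𝟙 X) (0 : X ⟶ Y) ≫ f := Cofork.IsColimit.π_desc' c₁ _ _
    have ex : ∀ (w : U ⟶ X), w ≫ prod.lift (𝟙 X) (0 : X ⟶ Y) = prod.lift w (0 : U ⟶ Y) := by
      intro w; apply Limits.prod.hom_ext <;> simp
    calc prod.lift x (0 : U ⟶ Y) ≫ f = x ≫ prod.lift (𝟙 X) (0 : X ⟶ Y) ≫ f := by
          rw [← Category.assoc, ex]
      _ = (x ≫ q₁) ≫ Cofork.IsColimit.desc c₁ (prod.lift (𝟙 X) (0 : X ⟶ Y) ≫ f) hφ := by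
          rw [Category.assoc, hψ]
      _ = (x' ≫ q₁) ≫ Cofork.IsColimit.desc c₁ (prod.lift (𝟙 X) (0 : X ⟶ Y) ≫ f) hφ := by
          rw [hxx]
      _ = x' ≫ prod.lift (𝟙 X) (0 : X ⟶ Y) ≫ f := by rw [Category.assoc, hψ]
      _ = prod.lift x' (0 : U ⟶ Y) ≫ f := by rw [← Category.assoc, ex]
  -- now the kernel pair components
  have hcondQ : pullback.fst (prod.map q₁ q₂) (prod.map q₁ q₂) ≫ prod.map q₁ q₂
      = pullback.snd (prod.map q₁ q₂) (prod.map q₁ q₂) ≫ prod.map q₁ q₂ := pullback.condition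
  have hα : (pullback.fst (prod.map q₁ q₂) (prod.map q₁ q₂) ≫ prod.fst) ≫ q₁
      = (pullback.snd (prod.map q₁ q₂) (prod.map q₁ q₂) ≫ prod.fst) ≫ q₁ := by
    have := congrArg (fun t => t ≫ (prod.fst : X' ⨯ Y' ⟶ X')) hcondQ
    simpa using this
  have hβ : (pullback.fst (prod.map q₁ q₂) (prod.map q₁ q₂) ≫ prod.snd) ≫ q₂
      = (pullback.snd (prod.map q₁ q₂) (prod.map q₁ q₂) ≫ prod.snd) ≫ q₂ := by
    have := congrArg (fun t => t ≫ (prod.snd : X' ⨯ Y' ⟶ Y')) hcondQ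
    simpa using this
  have ep1 : prod.lift (pullback.fst (prod.map q₁ q₂) (prod.map q₁ q₂) ≫ prod.fst)
      (pullback.fst (prod.map q₁ q₂) (prod.map q₁ q₂) ≫ prod.snd)
      = pullback.fst (prod.map q₁ q₂) (prod.map q₁ q₂) := by
    apply Limits.prod.hom_ext <;> simp [prod.lift_fst, prod.lift_snd]
  have ep2 : prod.lift (pullback.snd (prod.map q₁ q₂) (prod.map q₁ q₂) ≫ prod.fst)
      (pullback.snd (prod.map q₁ q₂) (prod.map q₁ q₂) ≫ prod.snd)
      = pullback.snd (prod.map q₁ q₂) (prod.map q₁ q₂) := by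
    apply Limits.prod.hom_ext <;> simp [prod.lift_fst, prod.lift_snd]
  calc pullback.fst (prod.map q₁ q₂) (prod.map q₁ q₂) ≫ f
      = prod.lift (pullback.fst (prod.map q₁ q₂) (prod.map q₁ q₂) ≫ prod.fst)
        (pullback.fst (prod.map q₁ q₂) (prod.map q₁ q₂) ≫ prod.snd) ≫ f := by rw [ep1]
    _ = prod.lift (pullback.fst (prod.map q₁ q₂) (prod.map q₁ q₂) ≫ prod.fst)
        (pullback.snd (prod.map q₁ q₂) (prod.map q₁ q₂) ≫ prod.snd) ≫ f :=
      shift1 _ _ _ (hy0 _ _ hβ)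
    _ = prod.lift (pullback.snd (prod.map q₁ q₂) (prod.map q₁ q₂) ≫ prod.fst)
        (pullback.snd (prod.map q₁ q₂) (prod.map q₁ q₂) ≫ prod.snd) ≫ f :=
      shift2 _ _ _ (hx0 _ _ hα)
    _ = pullback.snd (prod.map q₁ q₂) (prod.map q₁ q₂) ≫ f := by rw [ep2]
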